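/- For a graph G, a positive integer k, and real x, one has x^{−|V|}·B_q(G,x,k) = U(G; z, x_1, x_2, ...) evaluated at z = x+1 and x_i = x^{−1}·(k)_{q^i}, where (k)_n = k(k−1)···(k−n+1) denotes the falling factorial. -/

import Mathlib

open scoped Classical

/-- A (multi)graph with vertex set a finite set of naturals, edge labels a finite set of
naturals, each edge having an unordered pair of endpoints lying in the vertex set, and a
vertex-weight function. -/
structure WGraph where
  verts : Finset ℕ
  edges : Finset ℕ
  ends : ℕ → Sym2 ℕ
  ends_mem : ∀ e ∈ edges, ∀ v ∈ ends e, v ∈ verts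
  w : ℕ → ℕ

namespace WGraph

/-- Two vertices are joined in the spanning subgraph with edge set `A`. -/
def adj (G : WGraph) (A : Finset ℕ) (u v : ℕ) : Prop := ∃ i ∈ A, G.ends i = s(u, v)

/-- Reachability in the spanning subgraph with edge set `A`. -/
def reach (G : WGraph) (A : Finset ℕ) : ℕ → ℕ → Prop := Relation.ReflTransGen (G.adj A)

/-- The set of connected components of the spanning subgraph `(V, A)`. -/
noncomputable def components (G : WGraph) (A : Finset ℕ) : Finset (Finset ℕ) :=
  G.verts.image (fun v => G.verts.filter (G.reach A v))

/-- The total weight of a set of vertices. -/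
def wt (G : WGraph) (C : Finset ℕ) : ℕ := ∑ v ∈ C, G.w v

/-- All `k`-colourings: maps `V → {0, …, k-1}`, extended by `0` off the vertex set. -/
def allCol (G : WGraph) (k : ℕ) : Set (ℕ → ℕ) :=
  {s | (∀ v ∈ G.verts, s v < k) ∧ ∀ v ∉ G.verts, s v = 0}

/-- Proper `k`-colourings: no edge is monochromatic. -/
def properCol (G : WGraph) (k : ℕ) : Set (ℕ → ℕ) :=
  {s ∈ G.allCol k | ∀ e ∈ G.edges, ∀ a b : ℕ, G.ends e = s(a, b) → s a ≠ s b}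

/-- The weighted `(r,q)`-chromatic function
`M^ω_{r,q}(G;k) = ∑_{s ∈ col(G;k)} r^{∑_{v ∈ V} ω(v) q^{s(v)}}`. -/
noncomputable def Mw (G : WGraph) (r q : ℝ) (k : ℕ) : ℝ :=
  ∑ᶠ s ∈ G.properCol k, r ^ (∑ v ∈ G.verts, (G.w v : ℝ) * q ^ (s v))

/-- The unweighted `(r,q)`-chromatic function
`M_{r,q}(G;k) = ∑_{s ∈ col(G;k)} r^{∑_{v ∈ V} q^{s(v)}}`. -/
noncomputable def M (G : WGraph) (r q : ℝ) (k : ℕ) : ℝ :=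
  ∑ᶠ s ∈ G.properCol k, r ^ (∑ v ∈ G.verts, q ^ (s v))

/-- The weighted `(r,q)`-dichromatic function
`B^ω_{r,q}(G;x,k) = ∑_{A ⊆ E} x^{|A|} ∏_{C ∈ com(A)} ∑_{i=0}^{k-1} r^{ω(C) q^i}`. -/
noncomputable def Bw (G : WGraph) (r q x : ℝ) (k : ℕ) : ℝ :=
  ∑ A ∈ G.edges.powerset, x ^ A.card *
    ∏ C ∈ G.components A, ∑ i ∈ Finset.range k, r ^ ((G.wt C : ℝ) * q ^ i)

/-- The unweighted `(r,q)`-dichromatic function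
`B_{r,q}(G;x,k) = ∑_{A ⊆ E} x^{|A|} ∏_{C ∈ com(A)} ∑_{i=0}^{k-1} r^{|C| q^i}`. -/
noncomputable def B (G : WGraph) (r q x : ℝ) (k : ℕ) : ℝ :=
  ∑ A ∈ G.edges.powerset, x ^ A.card *
    ∏ C ∈ G.components A, ∑ i ∈ Finset.range k, r ^ ((C.card : ℝ) * q ^ i)

/-- Deletion of an edge. -/
def delete (G : WGraph) (e : ℕ) : WGraph where
  verts := G.verts
  edges := G.edges.erase e
  ends := G.ends
  ends_mem := fun i hi => G.ends_mem i (Finset.mem_of_mem_erase hi)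
  w := G.w

/-- Contraction of a non-loop edge `e` with ends `a`, `b`: the vertex `b` is merged into `a`,
whose new weight is `ω(a) + ω(b)`. -/
def contract (G : WGraph) (e a b : ℕ) : WGraph where
  verts := insert a (G.verts.erase b)
  edges := G.edges.erase e
  ends := fun i => (G.ends i).map (fun v => if v = b then a else v)
  ends_mem := by
    intro i hi v hv
    rcases Sym2.mem_map.1 hv with ⟨u, hu, rfl⟩
    by_cases h : u = b
    · simp [h]
    · simp only [if_neg h]
      exact Finset.mem_insert_of_mem
        (Finset.mem_erase.2 ⟨h, G.ends_mem i (Finset.mem_of_mem_erase hi) u hu⟩)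
  w := fun v => if v = a then G.w a + G.w b else G.w v

end WGraph

open WGraph

/-- The falling factorial `(y)_n = y(y−1)⋯(y−n+1)`. -/
def fallFact (y : ℝ) (n : ℕ) : ℝ := ∏ j ∈ Finset.range n, (y - j)

/-- The `q`-dichromate `B_q(G,x,y) = ∑_{A ⊆ E} x^{|A|} ∏_{W ∈ com(A)} (y)_{q^{|W|}}`. -/
noncomputable def Bq (G : WGraph) (q : ℕ) (x y : ℝ) : ℝ :=
  ∑ A ∈ G.edges.powerset, x ^ A.card *
    ∏ C ∈ G.components A, fallFact y (q ^ C.card)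

/-- The `U`-polynomial
`U(G; z, x_1, x_2, …) = ∑_{A ⊆ E} x(τ_A) (z−1)^{|A|−|V|+k(A)}`, where `x(τ_A)` is the
product over components `C` of `(V,A)` of the variable `x_{|C|}`, evaluated at `z` and at
real values `xs i` of the variables `x_i`. -/
noncomputable def U (G : WGraph) (z : ℝ) (xs : ℕ → ℝ) : ℝ :=
  ∑ A ∈ G.edges.powerset, (∏ C ∈ G.components A, xs C.card) *
    (z - 1) ^ (A.card + (G.components A).card - G.verts.card)

namespace WGraph

lemma adj_symm' (G : WGraph) (A : Finset ℕ) : Symmetric (G.adj A) := by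
  rintro u v ⟨i, hi, h⟩
  exact ⟨i, hi, h.trans (Sym2.eq_swap)⟩

lemma reach_symm (G : WGraph) (A : Finset ℕ) {u v : ℕ} (h : G.reach A u v) :
    G.reach A v u := by
  haveI : Std.Symm (G.adj A) := ⟨G.adj_symm' A⟩
  exact Std.Symm.symm (r := Relation.ReflTransGen (G.adj A)) _ _ h

lemma reach_mono (G : WGraph) {A B : Finset ℕ} (hAB : A ⊆ B) {u v : ℕ}
    (h : G.reach A u v) : G.reach B u v :=
  Relation.ReflTransGen.mono
    (show ∀ a b, G.adj A a b → G.adj B a b from fun _ _ ⟨i, hi, hh⟩ => ⟨i, hAB hi, hh⟩) u v h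

lemma comp_eq_of_reach (G : WGraph) (A : Finset ℕ) {u v : ℕ} (h : G.reach A u v) :
    G.verts.filter (G.reach A u) = G.verts.filter (G.reach A v) := by
  apply Finset.filter_congr
  intro w _
  exact ⟨fun hw => (G.reach_symm A h).trans hw, fun hw => h.trans hw⟩

lemma reach_insert (G : WGraph) {e a b : ℕ} (A : Finset ℕ) (hab : G.ends e = s(a, b))
    {u v : ℕ} (h : G.reach (insert e A) u v) :
    G.reach A u v ∨ (G.reach A u a ∧ G.reach A b v) ∨
      (G.reach A u b ∧ G.reach A a v) := by
  induction h with
  | refl => exact Or.inl Relation.ReflTransGen.refl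
  | tail hwz hadj ih =>
    obtain ⟨i, hi, hiz⟩ := hadj
    rcases Finset.mem_insert.1 hi with rfl | hiA
    · rw [hab] at hiz
      rcases Sym2.eq_iff.1 hiz.symm with ⟨rfl, rfl⟩ | ⟨rfl, rfl⟩
      · rcases ih with h1 | ⟨h1, h2⟩ | ⟨h1, h2⟩
        · exact Or.inr (Or.inl ⟨h1, Relation.ReflTransGen.refl⟩)
        · exact Or.inr (Or.inl ⟨h1, Relation.ReflTransGen.refl⟩)
        · exact Or.inl h1
      · rcases ih with h1 | ⟨h1, h2⟩ | ⟨h1, h2⟩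
        · exact Or.inr (Or.inr ⟨h1, Relation.ReflTransGen.refl⟩)
        · exact Or.inl h1
        · exact Or.inr (Or.inr ⟨h1, Relation.ReflTransGen.refl⟩)
    · rcases ih with h1 | ⟨h1, h2⟩ | ⟨h1, h2⟩
      · exact Or.inl (h1.tail ⟨i, hiA, hiz⟩)
      · exact Or.inr (Or.inl ⟨h1, h2.tail ⟨i, hiA, hiz⟩⟩)
      · exact Or.inr (Or.inr ⟨h1, h2.tail ⟨i, hiA, hiz⟩⟩)

lemma reach_empty (G : WGraph) {u v : ℕ} (h : G.reach ∅ u v) : u = v := by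
  induction h with
  | refl => rfl
  | tail _ hadj _ =>
    obtain ⟨i, hi, _⟩ := hadj
    exact absurd hi (Finset.notMem_empty i)

lemma verts_card_le (G : WGraph) : ∀ A ⊆ G.edges,
    G.verts.card ≤ A.card + (G.components A).card := by
  intro A
  induction A using Finset.induction_on with
  | empty =>
    intro _
    have himg : G.components ∅ = G.verts.image (fun v => {v}) := by
      apply Finset.image_congr
      intro v hv
      ext w
      simp only [Finset.mem_filter, Finset.mem_singleton]
      constructor
      · rintro ⟨_, hr⟩; exact (G.reach_empty hr).symm
      · rintro rfl; exact ⟨hv, Relation.ReflTransGen.refl⟩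
    rw [components] at himg
    rw [Finset.card_empty, components, himg,
      Finset.card_image_of_injective _ Finset.singleton_injective]
    omega
  | @insert e A he ih =>
    intro hsub
    have heE : e ∈ G.edges := hsub (Finset.mem_insert_self e A)
    have hAE : A ⊆ G.edges := fun i hi => hsub (Finset.mem_insert_of_mem hi)
    obtain ⟨a, b, hab⟩ : ∃ a b, G.ends e = s(a, b) :=
      (G.ends e).ind (fun a b => ⟨a, b, rfl⟩)
    have ha : a ∈ G.verts := G.ends_mem e heE a (hab ▸ Sym2.mem_mk_left a b)
    have hsubA : A ⊆ insert e A := Finset.subset_insert e A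
    have hadj_ab : G.reach (insert e A) a b :=
      Relation.ReflTransGen.single ⟨e, Finset.mem_insert_self e A, hab⟩
    -- S: vertices not reaching a in insert e A
    set S := G.verts.filter (fun v => ¬ G.reach (insert e A) v a) with hS
    have hF1 : ∀ v ∈ S, G.verts.filter (G.reach (insert e A) v)
        = G.verts.filter (G.reach A v) := by
      intro v hv
      have hva : ¬ G.reach (insert e A) v a := (Finset.mem_filter.1 hv).2
      apply Finset.filter_congr
      intro w _
      constructor
      · intro h
        rcases G.reach_insert A hab h with h1 | ⟨h1, _⟩ | ⟨h1, _⟩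
        · exact h1
        · exact absurd (G.reach_mono hsubA h1) hva
        · exact absurd ((G.reach_mono hsubA h1).trans
            (G.reach_symm _ hadj_ab)) hva
      · exact G.reach_mono hsubA
    -- components A is within image over S plus the two components of a,b
    have hsub1 : G.components A ⊆
        insert (G.verts.filter (G.reach A a))
          (insert (G.verts.filter (G.reach A b))
            (S.image (fun v => G.verts.filter (G.reach A v)))) := by
      intro C hC
      obtain ⟨v, hv, rfl⟩ := Finset.mem_image.1 hC
      by_cases hva : G.reach (insert e A) v a
      · rcases G.reach_insert A hab hva with h1 | ⟨h1, _⟩ | ⟨h1, _⟩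
        · exact Finset.mem_insert.2 (Or.inl (G.comp_eq_of_reach A h1))
        · exact Finset.mem_insert.2 (Or.inl (G.comp_eq_of_reach A h1))
        · exact Finset.mem_insert.2 (Or.inr (Finset.mem_insert.2
            (Or.inl (G.comp_eq_of_reach A h1))))
      · exact Finset.mem_insert.2 (Or.inr (Finset.mem_insert.2 (Or.inr
          (Finset.mem_image.2 ⟨v, Finset.mem_filter.2 ⟨hv, hva⟩, rfl⟩))))
    have hcard1 : (G.components A).card ≤
        (S.image (fun v => G.verts.filter (G.reach A v))).card + 2 := by
      have h1 := Finset.card_le_card hsub1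
      have h2 := Finset.card_insert_le (G.verts.filter (G.reach A a))
        (insert (G.verts.filter (G.reach A b))
          (S.image (fun v => G.verts.filter (G.reach A v))))
      have h3 := Finset.card_insert_le (G.verts.filter (G.reach A b))
        (S.image (fun v => G.verts.filter (G.reach A v)))
      omega
    -- components (insert e A) contains image over S plus comp' a
    have himgS : S.image (fun v => G.verts.filter (G.reach A v))
        = S.image (fun v => G.verts.filter (G.reach (insert e A) v)) :=
      (Finset.image_congr (fun v hv => (hF1 v hv))).symm
    have hsub2 : insert (G.verts.filter (G.reach (insert e A) a))
        (S.image (fun v => G.verts.filter (G.reach (insert e A) v)))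
        ⊆ G.components (insert e A) := by
      intro C hC
      rcases Finset.mem_insert.1 hC with rfl | hC'
      · exact Finset.mem_image.2 ⟨a, ha, rfl⟩
      · obtain ⟨v, hv, rfl⟩ := Finset.mem_image.1 hC'
        exact Finset.mem_image.2 ⟨v, (Finset.mem_filter.1 hv).1, rfl⟩
    have hnot : G.verts.filter (G.reach (insert e A) a) ∉
        S.image (fun v => G.verts.filter (G.reach (insert e A) v)) := by
      intro hmem
      obtain ⟨v, hv, heq⟩ := Finset.mem_image.1 hmem
      have : a ∈ G.verts.filter (G.reach (insert e A) v) := by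
        rw [heq]
        exact Finset.mem_filter.2 ⟨ha, Relation.ReflTransGen.refl⟩
      exact (Finset.mem_filter.1 hv).2 (Finset.mem_filter.1 this).2
    have hcard2 :
        (S.image (fun v => G.verts.filter (G.reach (insert e A) v))).card + 1
        ≤ (G.components (insert e A)).card := by
      have h2 := Finset.card_le_card hsub2
      rw [Finset.card_insert_of_notMem hnot] at h2
      omega
    have hcards : (G.components A).card ≤ (G.components (insert e A)).card + 1 := by
      rw [himgS] at hcard1
      omega
    have := ih hAE
    rw [Finset.card_insert_of_notMem he]
    omega

end WGraph

/-- For a graph `G`, a positive integer `k` and a nonzero real `x`,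
`x^{−|V|}·B_q(G,x,k) = U(G; z, x_1, x_2, …)` evaluated at `z = x+1` and
`x_i = x^{−1}·(k)_{q^i}`. -/
theorem Bq_eq_U (G : WGraph) (q k : ℕ) (hk : 0 < k) (x : ℝ) (hx : x ≠ 0) :
    (x ^ G.verts.card)⁻¹ * Bq G q x k =
      U G (x + 1) (fun i => x⁻¹ * fallFact k (q ^ i)) := by
  unfold Bq U
  rw [Finset.mul_sum]
  apply Finset.sum_congr rfl
  intro A hA
  have hle := G.verts_card_le A (Finset.mem_powerset.1 hA)
  rw [Finset.prod_mul_distrib, Finset.prod_const, add_sub_cancel_right]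
  set c := (G.components A).card
  set P := ∏ C ∈ G.components A, fallFact (k : ℝ) (q ^ C.card)
  have key : x ^ A.card * x ^ c = x ^ G.verts.card * x ^ (A.card + c - G.verts.card) := by
    rw [← pow_add, ← pow_add, Nat.add_sub_cancel' hle]
  have hc : x ^ c * x⁻¹ ^ c = 1 := by rw [← mul_pow, mul_inv_cancel₀ hx, one_pow]
  field_simp
  linear_combination (P * x⁻¹ ^ c) * key - x ^ A.card * P * hc
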